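/- Suppose r_0·T_OPT = Σ_p f̂_p·τ_p + Σ_i a_i·(ω_i − ω_{i−1}) and Σ_p f̂_p·τ_p ≥ ω_r·r_0 − Σ_i (a_i + (a_i/r_0)·Σ_p f̂_p·q'_{i,p})·(ω_i − ω_{i−1}), with all quantities nonnegative, ω_r = T_f > 0, Σ_p f̂_p = r_0, and Σ_i λ_i·(ω_i − ω_{i−1}) ≤ (ω_r − ω_0)·sup_i λ_i where λ_i = (a_i/r_0)·Σ_p f̂_p·q'_{i,p}. Then T_OPT/T_f ≥ 1 − (1/r_0²)·sup_i a_i·Σ_p f̂_p·q'_{i,p}. -/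

import Mathlib

open Finset in
/-- Core of Lemma 6 (combining Lemmas 5, 4 and 7): from the completion-time relation,
the path-wise lower bound on transit times and the telescoping bound on the
queueing-delay terms, conclude
`T_OPT/T_f ≥ 1 − (1/r0²)·sup_i a_i·Σ_p f̂_p q'_{i,p}`. -/
theorem stmt_12 {P : Type*} [Fintype P]
    (fhat τ : P → ℝ) (a : ℕ → ℝ) (ω : ℕ → ℝ) (q' : ℕ → P → ℝ)
    (r0 TOPT Tf : ℝ)
    (hr0 : 0 < r0) (hTf : 0 < Tf) (hω0 : 0 ≤ ω 0)
    (hfhat : ∀ p, 0 ≤ fhat p) (hτ : ∀ p, 0 ≤ τ p)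
    (ha : ∀ i, 0 ≤ a i) (hq : ∀ i p, 0 ≤ q' i p)
    (hωmono : Monotone ω)
    (hval : ∑ p : P, fhat p = r0)
    (hsum1 : Summable (fun i : ℕ => a i * (ω (i + 1) - ω i)))
    (hsum2 : Summable (fun i : ℕ => (a i / r0 * ∑ p : P, fhat p * q' i p) * (ω (i + 1) - ω i)))
    (hbdd : BddAbove (Set.range fun i : ℕ => a i * ∑ p : P, fhat p * q' i p))
    (h1 : r0 * TOPT = (∑ p : P, fhat p * τ p) + ∑' i : ℕ, a i * (ω (i + 1) - ω i))
    (h2 : (∑ p : P, fhat p * τ p) ≥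
      Tf * r0 - ∑' i : ℕ, (a i + a i / r0 * ∑ p : P, fhat p * q' i p) * (ω (i + 1) - ω i))
    (h3 : ∑' i : ℕ, (a i / r0 * ∑ p : P, fhat p * q' i p) * (ω (i + 1) - ω i) ≤
      (Tf - ω 0) * ⨆ i : ℕ, a i / r0 * ∑ p : P, fhat p * q' i p) :
    TOPT / Tf ≥ 1 - (1 / r0 ^ 2) * ⨆ i : ℕ, a i * ∑ p : P, fhat p * q' i p := by
  set M := ⨆ i : ℕ, a i * ∑ p : P, fhat p * q' i p with hMdef
  have hterm : ∀ i : ℕ, 0 ≤ a i * ∑ p : P, fhat p * q' i p := fun i =>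
    mul_nonneg (ha i) (Finset.sum_nonneg fun p _ => mul_nonneg (hfhat p) (hq i p))
  have hM0 : 0 ≤ M := (hterm 0).trans (le_ciSup hbdd 0)
  have hlbdd : BddAbove (Set.range fun i : ℕ => a i / r0 * ∑ p : P, fhat p * q' i p) := by
    obtain ⟨C, hC⟩ := hbdd
    refine ⟨C / r0, ?_⟩
    rintro x ⟨i, rfl⟩
    have h : a i * ∑ p : P, fhat p * q' i p ≤ C := hC ⟨i, rfl⟩
    show a i / r0 * ∑ p : P, fhat p * q' i p ≤ C / r0
    rw [div_mul_eq_mul_div]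
    gcongr
  have hlsup_le : (⨆ i : ℕ, a i / r0 * ∑ p : P, fhat p * q' i p) ≤ M / r0 := by
    refine ciSup_le fun i => ?_
    rw [div_mul_eq_mul_div]
    gcongr
    exact le_ciSup hbdd i
  have hlsup0 : 0 ≤ ⨆ i : ℕ, a i / r0 * ∑ p : P, fhat p * q' i p := by
    refine le_trans ?_ (le_ciSup hlbdd 0)
    exact mul_nonneg (div_nonneg (ha 0) hr0.le)
      (Finset.sum_nonneg fun p _ => mul_nonneg (hfhat p) (hq 0 p))
  have hS : (∑' i : ℕ, (a i / r0 * ∑ p : P, fhat p * q' i p) * (ω (i + 1) - ω i)) ≤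
      Tf * (M / r0) := by
    calc _ ≤ (Tf - ω 0) * ⨆ i : ℕ, a i / r0 * ∑ p : P, fhat p * q' i p := h3
    _ ≤ Tf * ⨆ i : ℕ, a i / r0 * ∑ p : P, fhat p * q' i p :=
        mul_le_mul_of_nonneg_right (by linarith) hlsup0
    _ ≤ Tf * (M / r0) := mul_le_mul_of_nonneg_left hlsup_le hTf.le
  have hsplit : (∑' i : ℕ, (a i + a i / r0 * ∑ p : P, fhat p * q' i p) * (ω (i + 1) - ω i)) =
      (∑' i : ℕ, a i * (ω (i + 1) - ω i)) +
      ∑' i : ℕ, (a i / r0 * ∑ p : P, fhat p * q' i p) * (ω (i + 1) - ω i) := by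
    rw [← Summable.tsum_add hsum1 hsum2]
    exact tsum_congr fun i => by ring
  have key : r0 * TOPT ≥ Tf * r0 - Tf * (M / r0) := by
    rw [h1]
    rw [hsplit] at h2
    linarith
  rw [ge_iff_le, le_div_iff₀ hTf]
  have hr2 : (0:ℝ) < r0 ^ 2 := by positivity
  have key2 : Tf * r0 ^ 2 - Tf * M ≤ r0 ^ 2 * TOPT := by
    have h := mul_le_mul_of_nonneg_left key hr0.le
    have hm : r0 * (Tf * (M / r0)) = Tf * M := by field_simp
    nlinarith [h]
  have he : (1 - 1 / r0 ^ 2 * M) * Tf * r0 ^ 2 = Tf * r0 ^ 2 - Tf * M := by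
    field_simp
  nlinarith [key2, hr2]
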